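/- For h ∈ (-β, β), the derivative of G satisfies the lower bound G'(h) = 2 ∫_0^{1/2} u L'(hu) du ≥ (1/(2h)) ( L(h/2) - L(h/4) ) for h > 0, and hence G'(h) → +∞ as h ↑ β. -/

import Mathlib

open Set

open Real Filter

noncomputable def auxS (w : ℝ) (n : ℕ) (h : ℝ) : ℝ :=
  ∑' k : ℤ, (k : ℝ) ^ n * Real.exp (h * k - w * |(k : ℝ)|)

/-- summability of |k|^n e^{-ε |k|} over ℤ -/
lemma summable_pow_exp {ε : ℝ} (hε : 0 < ε) (n : ℕ) :
    Summable (fun k : ℤ => |(k : ℝ)| ^ n * Real.exp (-ε * |(k : ℝ)|)) := by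
  have hnat : Summable (fun m : ℕ => (m : ℝ) ^ n * Real.exp (-ε) ^ m) := by
    apply summable_pow_mul_geometric_of_norm_lt_one
    rw [Real.norm_eq_abs, abs_of_pos (Real.exp_pos _)]
    exact Real.exp_lt_one_iff.mpr (by linarith)
  have key : ∀ m : ℕ, |((m : ℤ) : ℝ)| ^ n * Real.exp (-ε * |((m : ℤ) : ℝ)|)
      = (m : ℝ) ^ n * Real.exp (-ε) ^ m := by
    intro m
    rw [← Real.exp_nat_mul]
    push_cast
    rw [abs_of_nonneg (by positivity)]
    ring_nf
  apply Summable.of_nat_of_neg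
  · exact hnat.congr (fun m => (key m).symm)
  · refine hnat.congr (fun m => ?_)
    rw [← key m]
    push_cast
    rw [abs_neg]

/-- pointwise bound -/
lemma term_bound {w : ℝ} (n : ℕ) {b h : ℝ} (hb : b < w) (hh : |h| ≤ b) (k : ℤ) :
    |(k : ℝ) ^ n * Real.exp (h * k - w * |(k : ℝ)|)|
      ≤ |(k : ℝ)| ^ n * Real.exp (-(w - b) * |(k : ℝ)|) := by
  rw [abs_mul, abs_pow, abs_of_pos (Real.exp_pos _)]
  have hhk : h * k ≤ b * |(k : ℝ)| := by
    calc h * k ≤ |h * k| := le_abs_self _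
    _ = |h| * |(k : ℝ)| := abs_mul _ _
    _ ≤ b * |(k : ℝ)| := mul_le_mul_of_nonneg_right hh (abs_nonneg _)
  have hexp : Real.exp (h * k - w * |(k : ℝ)|) ≤ Real.exp (-(w - b) * |(k : ℝ)|) :=
    Real.exp_le_exp.mpr (by nlinarith [abs_nonneg (k : ℝ)])
  exact mul_le_mul_of_nonneg_left hexp (by positivity)

lemma summable_auxS {w : ℝ} (n : ℕ) {h : ℝ} (hh : |h| < w) :
    Summable (fun k : ℤ => (k : ℝ) ^ n * Real.exp (h * k - w * |(k : ℝ)|)) := by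
  have h1 : (0:ℝ) < w - |h| := by linarith
  refine Summable.of_norm ?_
  refine (summable_pow_exp h1 n).of_nonneg_of_le (fun k => norm_nonneg _) (fun k => ?_)
  exact term_bound n hh le_rfl k

lemma hasDerivAt_auxS {w : ℝ} (n : ℕ) {h : ℝ} (hh : |h| < w) :
    HasDerivAt (auxS w n) (auxS w (n + 1) h) h := by
  set b : ℝ := (|h| + w) / 2 with hbdef
  have hb : b < w := by simp only [hbdef]; linarith
  have hhb : |h| < b := by simp only [hbdef]; linarith
  have hwb : (0:ℝ) < w - b := by linarith
  have husum : Summable (fun k : ℤ => |(k : ℝ)| ^ (n+1) * Real.exp (-(w - b) * |(k : ℝ)|)) :=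
    summable_pow_exp hwb (n+1)
  have key := hasDerivAt_tsum_of_isPreconnected husum (isOpen_Ioo (a := -b) (b := b))
      (convex_Ioo (-b) b).isPreconnected
      (g := fun (k : ℤ) (y : ℝ) => (k : ℝ) ^ n * Real.exp (y * k - w * |(k : ℝ)|))
      (g' := fun (k : ℤ) (y : ℝ) => (k : ℝ) ^ (n+1) * Real.exp (y * k - w * |(k : ℝ)|))
      (fun k y _ => ?_) (fun k y hy => ?_) (y₀ := h) (abs_lt.mp hhb |> fun hp => ⟨hp.1, hp.2⟩)
      (summable_auxS n hh) (abs_lt.mp hhb |> fun hp => ⟨hp.1, hp.2⟩)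
  · exact key
  · have hd : HasDerivAt (fun y : ℝ => y * (k : ℝ) - w * |(k : ℝ)|) (k : ℝ) y := by
      simpa using ((hasDerivAt_id y).mul_const ((k : ℝ))).sub_const (w * |(k : ℝ)|)
    have := (hd.exp).const_mul ((k : ℝ) ^ n)
    exact this.congr_deriv (by ring)
  · have hyb : |y| ≤ b := le_of_lt (abs_lt.mpr hy)
    have := term_bound (n+1) hb hyb k
    rw [Real.norm_eq_abs]
    calc |(k : ℝ) ^ (n+1) * Real.exp (y * k - w * |(k : ℝ)|)|
        ≤ |(k : ℝ)| ^ (n+1) * Real.exp (-(w - b) * |(k : ℝ)|) := this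
      _ = |(k : ℝ)| ^ (n+1) * Real.exp (-(w - b) * |(k : ℝ)|) := rfl

lemma auxS0_pos {w : ℝ} {h : ℝ} (hh : |h| < w) : 0 < auxS w 0 h := by
  refine Summable.tsum_pos (summable_auxS 0 hh) (fun k => by positivity) 0 ?_
  norm_num

lemma auxS0_even {w : ℝ} (h : ℝ) : auxS w 0 (-h) = auxS w 0 h := by
  unfold auxS
  rw [← (Equiv.neg ℤ).tsum_eq (fun k : ℤ => (k:ℝ) ^ 0 * Real.exp (-h * k - w * |(k : ℝ)|))]
  apply tsum_congr
  intro k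
  simp only [Equiv.neg_apply, Int.cast_neg, pow_zero, one_mul, abs_neg]
  ring_nf

lemma auxS1_nonneg {w : ℝ} {h : ℝ} (hh0 : 0 ≤ h) (hh : |h| < w) : 0 ≤ auxS w 1 h := by
  set f : ℤ → ℝ := fun k => (k : ℝ) ^ 1 * Real.exp (h * k - w * |(k : ℝ)|) with hf
  have hs : Summable f := summable_auxS 1 hh
  have hs' : Summable (fun k : ℤ => f (-k)) := ((Equiv.neg ℤ).summable_iff (f := f)).mpr hs
  have hsym : ∑' k : ℤ, f (-k) = ∑' k, f k := (Equiv.neg ℤ).tsum_eq f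
  have key : auxS w 1 h = (∑' k : ℤ, (f k + f (-k))) / 2 := by
    rw [Summable.tsum_add hs hs', hsym]
    unfold auxS
    rw [← hf]
    ring
  rw [key]
  apply div_nonneg _ (by norm_num)
  apply tsum_nonneg
  intro k
  simp only [hf, Int.cast_neg, abs_neg, pow_one]
  have hmono : ∀ a b : ℝ, a ≤ b → Real.exp a ≤ Real.exp b := fun a b hab => Real.exp_le_exp.mpr hab
  rcases le_or_gt 0 (k : ℝ) with hk | hk
  · have : Real.exp (h * -(k:ℝ) - w * |(k:ℝ)|) ≤ Real.exp (h * k - w * |(k:ℝ)|) :=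
      hmono _ _ (by nlinarith)
    nlinarith
  · have : Real.exp (h * (k:ℝ) - w * |(k:ℝ)|) ≤ Real.exp (h * -(k:ℝ) - w * |(k:ℝ)|) :=
      hmono _ _ (by nlinarith)
    nlinarith

noncomputable def auxL (w c : ℝ) (h : ℝ) : ℝ := Real.log (auxS w 0 h) - Real.log c

lemma hasDerivAt_auxL {w c : ℝ} {h : ℝ} (hh : |h| < w) :
    HasDerivAt (auxL w c) (auxS w 1 h / auxS w 0 h) h :=
  ((hasDerivAt_auxS 0 hh).log (ne_of_gt (auxS0_pos hh))).sub_const _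

lemma deriv_auxL {w c : ℝ} {h : ℝ} (hh : |h| < w) :
    deriv (auxL w c) h = auxS w 1 h / auxS w 0 h :=
  (hasDerivAt_auxL hh).deriv

lemma continuousAt_auxL {w c : ℝ} {h : ℝ} (hh : |h| < w) : ContinuousAt (auxL w c) h :=
  (hasDerivAt_auxL hh).continuousAt

lemma auxL_even {w c : ℝ} (h : ℝ) : auxL w c (-h) = auxL w c h := by
  unfold auxL; rw [auxS0_even]

lemma monotoneOn_auxL {w c : ℝ} (hw : 0 < w) : MonotoneOn (auxL w c) (Ico 0 w) := by
  have hsub : ∀ x ∈ Ico (0:ℝ) w, |x| < w := by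
    intro x hx; rw [abs_lt]; constructor <;> [linarith [hx.1]; exact hx.2]
  apply monotoneOn_of_deriv_nonneg (convex_Ico 0 w)
  · intro x hx
    exact (continuousAt_auxL (hsub x hx)).continuousWithinAt
  · intro x hx
    rw [interior_Ico] at hx
    exact ((hasDerivAt_auxL (hsub x ⟨hx.1.le, hx.2⟩)).differentiableAt).differentiableWithinAt
  · intro x hx
    rw [interior_Ico] at hx
    have hx' : |x| < w := hsub x ⟨hx.1.le, hx.2⟩
    rw [deriv_auxL hx']
    exact div_nonneg (auxS1_nonneg hx.1.le hx') (auxS0_pos hx').le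

lemma tendsto_auxS0_atTop {w : ℝ} (hw : 0 < w) :
    Filter.Tendsto (auxS w 0) (nhdsWithin w (Iio w)) Filter.atTop := by
  rw [Filter.tendsto_atTop]
  intro M
  set N : ℕ := ⌈2 * M⌉₊ with hN
  have hMN : M ≤ ((N : ℝ) + 1) / 2 := by
    have := Nat.le_ceil (2 * M)
    rw [← hN] at this
    linarith
  set δ : ℝ := min (w / 2) (Real.log 2 / (N + 1)) with hδ
  have hδpos : 0 < δ := by
    apply lt_min (by linarith)
    apply div_pos (Real.log_pos (by norm_num))
    positivity
  have hmem : Ioo (w - δ) w ∈ nhdsWithin w (Iio w) :=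
    Ioo_mem_nhdsLT_of_mem ⟨by linarith, le_rfl⟩
  filter_upwards [hmem] with t ht
  have htw : t < w := ht.2
  have ht0 : 0 < t := by
    have : w - δ ≥ w / 2 := by
      have := min_le_left (w / 2) (Real.log 2 / (N + 1)); simp only [← hδ] at this; linarith
    linarith [ht.1]
  have htabs : |t| < w := by rw [abs_of_pos ht0]; exact htw
  have hterm : ∀ k ∈ Finset.Icc (0:ℤ) (N:ℤ),
      (1:ℝ)/2 ≤ (k : ℝ) ^ 0 * Real.exp (t * k - w * |(k : ℝ)|) := by
    intro k hk
    rw [Finset.mem_Icc] at hk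
    have hk0 : (0:ℝ) ≤ (k:ℝ) := by exact_mod_cast hk.1
    have hkN : (k:ℝ) ≤ (N:ℝ) := by exact_mod_cast hk.2
    rw [pow_zero, one_mul, abs_of_nonneg hk0]
    have h1 : t * k - w * k = (t - w) * k := by ring
    rw [h1]
    have h2 : -Real.log 2 ≤ (t - w) * k := by
      have hδ2 : δ ≤ Real.log 2 / (N + 1) := min_le_right _ _
      have h3 : (t - w) * k ≥ (t - w) * N := by
        apply mul_le_mul_of_nonpos_left hkN (by linarith)
      have h4 : (t - w) * N ≥ -δ * N := by
        have : -(δ:ℝ) ≤ t - w := by linarith [ht.1]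
        apply mul_le_mul_of_nonneg_right this (by positivity)
      have h5 : -δ * N ≥ -Real.log 2 := by
        have h6 : δ * (N:ℝ) ≤ (Real.log 2 / (N + 1)) * (N + 1) := by
          apply mul_le_mul hδ2 (by linarith) (by positivity) (by positivity)
        rw [div_mul_cancel₀] at h6
        · linarith
        · positivity
      linarith
    calc (1:ℝ)/2 = Real.exp (-Real.log 2) := by
          rw [Real.exp_neg, Real.exp_log (by norm_num)]; norm_num
      _ ≤ Real.exp ((t - w) * k) := Real.exp_le_exp.mpr h2
  have hcard : (Finset.Icc (0:ℤ) (N:ℤ)).card = N + 1 := by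
    rw [Int.card_Icc]
    simp
  calc M ≤ ((N:ℝ) + 1) / 2 := hMN
    _ = (Finset.Icc (0:ℤ) (N:ℤ)).card • ((1:ℝ)/2) := by
        rw [hcard, nsmul_eq_mul]; push_cast; ring
    _ ≤ ∑ k ∈ Finset.Icc (0:ℤ) (N:ℤ), (k : ℝ) ^ 0 * Real.exp (t * k - w * |(k : ℝ)|) :=
        Finset.card_nsmul_le_sum _ _ _ hterm
    _ ≤ auxS w 0 t := by
        apply Summable.sum_le_tsum _ (fun k _ => by positivity) (summable_auxS 0 htabs)

lemma tendsto_auxL_atTop {w : ℝ} (c : ℝ) (hw : 0 < w) :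
    Filter.Tendsto (auxL w c) (nhdsWithin w (Iio w)) Filter.atTop := by
  have h1 : Filter.Tendsto (fun t => Real.log (auxS w 0 t)) (nhdsWithin w (Iio w)) Filter.atTop :=
    Real.tendsto_log_atTop.comp (tendsto_auxS0_atTop hw)
  have h2 := Filter.tendsto_atTop_add_const_right _ (-Real.log c) h1
  exact h2.congr (fun t => by unfold auxL; rw [sub_eq_add_neg])


open intervalIntegral MeasureTheory in
/-- For `h ∈ (0, β)`, `G'(h) = 2 ∫_0^{1/2} u L'(hu) du ≥ (1/(2h))(L(h/2) - L(h/4))`,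
and consequently `G'(h) → +∞` as `h ↑ β`. -/
theorem derivG_lower_bound (β : ℝ) (hβ : 0 < β)
    (c : ℝ) (hc : c = ∑' k : ℤ, Real.exp (-(β / 2) * |(k : ℝ)|))
    (L : ℝ → ℝ)
    (hL : ∀ h : ℝ, L h =
      Real.log (∑' k : ℤ, Real.exp (h * k) * Real.exp (-(β / 2) * |(k : ℝ)|) / c))
    (G : ℝ → ℝ)
    (hG : ∀ h : ℝ, G h = ∫ x in (0:ℝ)..1, L (h * (1 / 2 - x))) :
    (∀ h ∈ Ioo (0:ℝ) β,
        (deriv G h = 2 * ∫ u in (0:ℝ)..(1 / 2), u * deriv L (h * u)) ∧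
        (1 / (2 * h)) * (L (h / 2) - L (h / 4)) ≤ deriv G h) ∧
    Filter.Tendsto (deriv G) (nhdsWithin β (Iio β)) Filter.atTop := by

  have hw : 0 < β / 2 := by linarith
  set w : ℝ := β / 2 with hwdef
  have hceq : c = auxS w 0 0 := by
    rw [hc]; unfold auxS; apply tsum_congr; intro k
    simp [neg_mul]
  have hcpos : 0 < c := by
    rw [hceq]; exact auxS0_pos (by rwa [abs_zero])
  have hLa : ∀ {x : ℝ}, |x| < w → L x = auxL w c x := by
    intro x hx
    rw [hL x]
    have e1 : (fun k : ℤ => Real.exp (x * k) * Real.exp (-(β/2) * |(k:ℝ)|) / c)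
        = fun k : ℤ => ((k:ℝ) ^ 0 * Real.exp (x * k - w * |(k:ℝ)|)) / c := by
      funext k
      rw [pow_zero, one_mul, ← Real.exp_add]
      congr 2
      rw [hwdef]; ring
    rw [e1, tsum_div_const]
    have e2 : (∑' k : ℤ, (k:ℝ) ^ 0 * Real.exp (x * k - w * |(k:ℝ)|)) = auxS w 0 x := rfl
    rw [e2]
    unfold auxL
    rw [Real.log_div (ne_of_gt (auxS0_pos hx)) (ne_of_gt hcpos)]
  have hopen : IsOpen {x : ℝ | |x| < w} := isOpen_lt continuous_abs continuous_const
  have hLev : ∀ {x : ℝ}, |x| < w → L =ᶠ[nhds x] auxL w c := by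
    intro x hx
    exact Filter.eventuallyEq_of_mem (hopen.mem_nhds hx) (fun y hy => hLa hy)
  have hderivLa : ∀ {x : ℝ}, |x| < w → deriv L x = auxS w 1 x / auxS w 0 x := by
    intro x hx
    rw [(hLev hx).deriv_eq, deriv_auxL hx]
  set F : ℝ → ℝ := fun y => ∫ t in (0:ℝ)..y, auxL w c t with hFdef
  have hIntA : ∀ {a b : ℝ}, |a| < w → |b| < w →
      IntervalIntegrable (auxL w c) volume a b := by
    intro a b ha hb
    apply ContinuousOn.intervalIntegrable
    intro x hx
    have hx' : x ∈ Ioo (-w) w := by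
      have := (Set.ordConnected_Ioo (a := -w) (b := w)).uIcc_subset
        (abs_lt.mp ha |> fun p => ⟨p.1, p.2⟩) (abs_lt.mp hb |> fun p => ⟨p.1, p.2⟩) hx
      exact this
    exact (continuousAt_auxL (abs_lt.mpr ⟨by linarith [hx'.1], hx'.2⟩)).continuousWithinAt
  have hFd : ∀ {y : ℝ}, |y| < w → HasDerivAt F (auxL w c y) y := by
    intro y hy
    refine intervalIntegral.integral_hasDerivAt_right (hIntA (by rwa [abs_zero]) hy)
      ?_ (continuousAt_auxL hy)
    exact (ContinuousAt.stronglyMeasurableAtFilter hopen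
      (fun x hx => continuousAt_auxL hx) y hy)
  have hFodd : ∀ y : ℝ, F (-y) = - F y := by
    intro y
    have h1 : (fun x : ℝ => auxL w c (-x)) = auxL w c := funext (auxL_even)
    have h2 : F y = ∫ t in (-y)..(0:ℝ), auxL w c t := by
      have h3 := intervalIntegral.integral_comp_neg (a := (0:ℝ)) (b := y) (f := auxL w c)
      simp only [auxL_even, neg_zero] at h3
      exact h3.symm ▸ rfl
    show (∫ t in (0:ℝ)..(-y), auxL w c t) = - F y
    rw [h2, intervalIntegral.integral_symm]
  have habs : ∀ {a b t : ℝ}, |a| < w → |b| < w → t ∈ uIcc a b → |t| < w := by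
    intro a b t ha hb ht
    have h1 := abs_lt.mp ha; have h2 := abs_lt.mp hb
    have h3 := (Set.ordConnected_Ioo (a := -w) (b := w)).uIcc_subset
      (⟨h1.1, h1.2⟩ : a ∈ Ioo (-w) w) (⟨h2.1, h2.2⟩ : b ∈ Ioo (-w) w) ht
    exact abs_lt.mpr ⟨h3.1, h3.2⟩
  have habs0 : |(0:ℝ)| < w := by rwa [abs_zero]
  have hGrep : ∀ h' ∈ Ioo (0:ℝ) β, G h' = h'⁻¹ * (F (h'/2) - F (-(h'/2))) := by
    intro h' hmem'
    have h0' : 0 < h' := hmem'.1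
    have hne : h' ≠ 0 := ne_of_gt h0'
    have hh2 : |h' / 2| < w := by
      rw [abs_of_pos (by linarith)]; rw [hwdef]; linarith [hmem'.2]
    rw [hG h']
    rw [intervalIntegral.integral_congr (g := fun x => L (h' / 2 - h' * x))
      (fun x _ => by show L _ = L _; congr 1; ring)]
    rw [intervalIntegral.integral_comp_sub_mul L hne (h' / 2)]
    have e0 : h' / 2 - h' * 1 = -(h' / 2) := by ring
    have e0' : h' / 2 - h' * 0 = h' / 2 := by ring
    rw [e0, e0']
    have e2 : (∫ t in (-(h'/2))..(h'/2), L t) = ∫ t in (-(h'/2))..(h'/2), auxL w c t := by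
      apply intervalIntegral.integral_congr
      intro t ht
      exact hLa (habs (by rwa [abs_neg]) hh2 ht)
    rw [e2]
    have e3 : (∫ t in (-(h'/2))..(h'/2), auxL w c t) = F (h'/2) - F (-(h'/2)) :=
      (intervalIntegral.integral_interval_sub_left (hIntA habs0 hh2)
        (hIntA habs0 (by rwa [abs_neg]))).symm
    rw [e3, smul_eq_mul]
  have main : ∀ h ∈ Ioo (0:ℝ) β,
      (deriv G h = 2 * ∫ u in (0:ℝ)..(1/2), u * deriv L (h * u)) ∧
      (1 / (2 * h)) * (L (h / 2) - L (h / 4)) ≤ deriv G h := by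
    intro h hmem
    have h0 : 0 < h := hmem.1
    have hne : h ≠ 0 := ne_of_gt h0
    have hh2 : |h / 2| < w := by
      rw [abs_of_pos (by linarith)]; rw [hwdef]; linarith [hmem.2]
    have hh4 : |h / 4| < w := by
      rw [abs_of_pos (by linarith)]; rw [hwdef]; linarith [hmem.2]
    set A := auxL w c (h / 2) with hA
    set B := auxL w c (h / 4) with hB
    set Fh := F (h / 2) with hFh
    have hFd2 : HasDerivAt (fun h' : ℝ => F (h' / 2)) (A * (1/2)) h := by
      have hinner : HasDerivAt (fun h' : ℝ => h' / 2) (1/2 : ℝ) h := by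
        simpa using (hasDerivAt_id h).div_const 2
      exact (hFd hh2).comp h hinner
    have hFd3 : HasDerivAt (fun h' : ℝ => F (-(h' / 2))) (A * (-(1/2))) h := by
      have hinner : HasDerivAt (fun h' : ℝ => -(h' / 2)) (-(1/2) : ℝ) h := by
        simpa [Pi.neg_def] using ((hasDerivAt_id h).div_const 2).neg
      have houter : HasDerivAt F (auxL w c (-(h/2))) (-(h/2)) := hFd (by rwa [abs_neg])
      have hcomp := houter.comp h hinner
      rw [auxL_even, ← hA] at hcomp
      exact hcomp
    have hinv : HasDerivAt (fun h' : ℝ => h'⁻¹) (-((h^2)⁻¹)) h := hasDerivAt_inv hne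
    have hmul := hinv.mul (hFd2.sub hFd3)
    have hGd : HasDerivAt G
        (-((h^2)⁻¹) * (F (h/2) - F (-(h/2))) + h⁻¹ * (A * (1/2) - A * (-(1/2)))) h := by
      apply hmul.congr_of_eventuallyEq
      filter_upwards [isOpen_Ioo.mem_nhds hmem] with x hx
      exact hGrep x hx
    have hderivG : deriv G h = h⁻¹ * A - 2 * (h^2)⁻¹ * Fh := by
      rw [hGd.deriv, hFodd, ← hFh]; ring
    have hbnd : ∀ {x : ℝ}, x ∈ uIcc (0:ℝ) (1/2) → |h * x| < w := by
      intro x hx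
      rw [uIcc_of_le (by norm_num)] at hx
      rw [abs_of_nonneg (mul_nonneg h0.le hx.1)]
      have hx2 : h * x ≤ h * (1/2) := by nlinarith [hx.2]
      calc h * x ≤ h * (1/2) := hx2
        _ < w := by rw [hwdef]; linarith [hmem.2]
    have hinner' : ∀ x : ℝ, HasDerivAt (fun y : ℝ => h * y) h x := fun x => by
      simpa using (hasDerivAt_id x).const_mul h
    have hv : ∀ x ∈ uIcc (0:ℝ) (1/2), HasDerivAt (fun y : ℝ => auxL w c (h * y))
        (auxS w 1 (h * x) / auxS w 0 (h * x) * h) x := fun x hx =>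
      (hasDerivAt_auxL (hbnd hx)).comp x (hinner' x)
    have hv'cont : ContinuousOn (fun x : ℝ => auxS w 1 (h * x) / auxS w 0 (h * x) * h)
        (uIcc (0:ℝ) (1/2)) := by
      intro x hx
      have hm : ContinuousAt (fun y : ℝ => h * y) x :=
        (continuous_const.mul continuous_id).continuousAt
      exact ((((hasDerivAt_auxS 1 (hbnd hx)).continuousAt.comp hm).div
        (((hasDerivAt_auxS 0 (hbnd hx)).continuousAt).comp hm)
        (ne_of_gt (auxS0_pos (hbnd hx)))).mul continuousAt_const).continuousWithinAt
    have hparts := intervalIntegral.integral_mul_deriv_eq_deriv_mul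
      (u := fun x : ℝ => x) (u' := fun _ => (1:ℝ))
      (v := fun x : ℝ => auxL w c (h * x))
      (v' := fun x => auxS w 1 (h * x) / auxS w 0 (h * x) * h)
      (a := 0) (b := 1/2)
      (fun x _ => hasDerivAt_id x) hv intervalIntegrable_const hv'cont.intervalIntegrable
    have hTmul : (∫ x in (0:ℝ)..(1/2), x * (auxS w 1 (h * x) / auxS w 0 (h * x) * h))
        = h * ∫ x in (0:ℝ)..(1/2), x * (auxS w 1 (h * x) / auxS w 0 (h * x)) := by
      rw [← intervalIntegral.integral_const_mul]
      apply intervalIntegral.integral_congr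
      intro x _
      dsimp only
      ring
    have hIcomp : (∫ x in (0:ℝ)..(1/2), auxL w c (h * x)) = h⁻¹ * Fh := by
      have e : h * (1/2) = h/2 := by ring
      rw [intervalIntegral.integral_comp_mul_left (fun t => auxL w c t) hne, mul_zero, e,
        smul_eq_mul]
    rw [hTmul] at hparts
    simp only [one_mul, zero_mul, sub_zero] at hparts
    rw [hIcomp] at hparts
    have hA2 : auxL w c (h * (1/2)) = A := by rw [hA]; congr 1; ring
    rw [hA2] at hparts
    have hT : (∫ x in (0:ℝ)..(1/2), x * (auxS w 1 (h * x) / auxS w 0 (h * x)))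
        = h⁻¹ * ((1/2) * A - h⁻¹ * Fh) := by
      field_simp at hparts ⊢
      linarith [hparts]
    have hintcongr : (∫ u in (0:ℝ)..(1/2), u * deriv L (h * u))
        = ∫ x in (0:ℝ)..(1/2), x * (auxS w 1 (h * x) / auxS w 0 (h * x)) := by
      apply intervalIntegral.integral_congr
      intro x hx
      dsimp only
      rw [hderivLa (hbnd hx)]
    constructor
    · rw [hderivG, hintcongr, hT]
      field_simp
    · rw [hLa hh2, hLa hh4, ← hA, ← hB, hderivG]
      have hsplit : Fh = (∫ t in (0:ℝ)..(h/4), auxL w c t)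
          + ∫ t in (h/4)..(h/2), auxL w c t := by
        rw [hFh]
        exact (intervalIntegral.integral_add_adjacent_intervals
          (hIntA habs0 hh4) (hIntA hh4 hh2)).symm
      have hmono := monotoneOn_auxL (w := w) (c := c) hw
      have hmemIco : ∀ {t : ℝ}, 0 ≤ t → t ≤ h/2 → t ∈ Ico (0:ℝ) w :=
        fun ht0 ht2 => ⟨ht0, lt_of_le_of_lt ht2 (abs_lt.mp hh2).2⟩
      have hb1 : (∫ t in (0:ℝ)..(h/4), auxL w c t) ≤ (h/4) * B := by
        have hmono1 := intervalIntegral.integral_mono_on (a := 0) (b := h/4)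
          (g := fun _ => B) (by linarith) (hIntA habs0 hh4) intervalIntegrable_const
          (fun x hx => hmono (hmemIco hx.1 (by linarith [hx.2]))
            (hmemIco (by linarith) (by linarith)) hx.2)
        simpa [intervalIntegral.integral_const, smul_eq_mul] using hmono1
      have hb2 : (∫ t in (h/4)..(h/2), auxL w c t) ≤ (h/4) * A := by
        have hmono2 := intervalIntegral.integral_mono_on (a := h/4) (b := h/2)
          (g := fun _ => A) (by linarith) (hIntA hh4 hh2) intervalIntegrable_const
          (fun x hx => hmono (hmemIco (by linarith [hx.1]) hx.2)
            (hmemIco (by linarith) (by linarith)) hx.2)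
        have e : h/2 - h/4 = h/4 := by ring
        simpa [intervalIntegral.integral_const, smul_eq_mul, e] using hmono2
      have hFle : Fh ≤ (h/4) * (B + A) := by rw [hsplit]; linarith
      have hkey : (h⁻¹ * A - 2 * (h^2)⁻¹ * Fh) - (1/(2*h)) * (A - B)
          = (2 * (h^2)⁻¹) * ((h/4) * (B + A) - Fh) := by
        field_simp
        ring
      have hpos : (0:ℝ) ≤ (2 * (h^2)⁻¹) * ((h/4) * (B + A) - Fh) :=
        mul_nonneg (by positivity) (sub_nonneg.mpr hFle)
      linarith
  refine ⟨main, ?_⟩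
  have hmono := monotoneOn_auxL (w := w) (c := c) hw
  have hbound : ∀ h ∈ Ioo (0:ℝ) β,
      (1/(2*β)) * (auxL w c (h/2) - auxL w c (β/4)) ≤ deriv G h := by
    intro h hmem
    have h0 : 0 < h := hmem.1
    have hh2 : |h/2| < w := by
      rw [abs_of_pos (by linarith)]; rw [hwdef]; linarith [hmem.2]
    have hh4 : |h/4| < w := by
      rw [abs_of_pos (by linarith)]; rw [hwdef]; linarith [hmem.2]
    have hβ4 : (β/4) ∈ Ico (0:ℝ) w := ⟨by linarith, by rw [hwdef]; linarith⟩
    have hBC : auxL w c (h/4) ≤ auxL w c (β/4) :=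
      hmono ⟨by linarith, (abs_lt.mp hh4).2⟩ hβ4 (by linarith [hmem.2])
    have hBA : auxL w c (h/4) ≤ auxL w c (h/2) :=
      hmono ⟨by linarith, (abs_lt.mp hh4).2⟩ ⟨by linarith, (abs_lt.mp hh2).2⟩ (by linarith)
    have hlow := (main h hmem).2
    rw [hLa hh2, hLa hh4] at hlow
    have hq : 1/(2*β) ≤ 1/(2*h) := one_div_le_one_div_of_le (by linarith) (by linarith [hmem.2])
    have e1 : (1/(2*β)) * (auxL w c (h/2) - auxL w c (h/4))
        ≤ (1/(2*h)) * (auxL w c (h/2) - auxL w c (h/4)) :=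
      mul_le_mul_of_nonneg_right hq (sub_nonneg.mpr hBA)
    have e2 : (1/(2*β)) * (auxL w c (h/2) - auxL w c (β/4))
        ≤ (1/(2*β)) * (auxL w c (h/2) - auxL w c (h/4)) :=
      mul_le_mul_of_nonneg_left (by linarith) (by positivity)
    linarith
  have ht2 : Filter.Tendsto (fun h : ℝ => h/2) (nhdsWithin β (Iio β)) (nhdsWithin w (Iio w)) := by
    rw [tendsto_nhdsWithin_iff]
    constructor
    · have h1 : Filter.Tendsto (fun h : ℝ => h/2) (nhds β) (nhds (β/2)) :=
        (continuous_id.div_const 2).tendsto β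
      have h2 := h1.mono_left (nhdsWithin_le_nhds (s := Iio β))
      rw [hwdef]
      exact h2
    · filter_upwards [self_mem_nhdsWithin] with x hx
      simp only [mem_Iio] at hx ⊢
      rw [hwdef]; linarith
  have hLtend : Filter.Tendsto (fun h : ℝ => auxL w c (h/2)) (nhdsWithin β (Iio β))
      Filter.atTop := (tendsto_auxL_atTop c hw).comp ht2
  have hsub : Filter.Tendsto (fun h : ℝ => auxL w c (h/2) - auxL w c (β/4))
      (nhdsWithin β (Iio β)) Filter.atTop :=
    (Filter.tendsto_atTop_add_const_right _ (-(auxL w c (β/4))) hLtend).congr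
      (fun x => by rw [sub_eq_add_neg])
  have hfull : Filter.Tendsto (fun h : ℝ => (1/(2*β)) * (auxL w c (h/2) - auxL w c (β/4)))
      (nhdsWithin β (Iio β)) Filter.atTop :=
    Filter.Tendsto.const_mul_atTop (by positivity) hsub
  apply Filter.tendsto_atTop_mono' _ ?_ hfull
  filter_upwards [Ioo_mem_nhdsLT_of_mem (⟨hβ, le_rfl⟩ : β ∈ Ioc 0 β)] with h hh
  exact hbound h hh
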